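/- Let d ≥ 2, Λ ≥ 1, and let φ : ℝ^{d-1} → ℝ be Lipschitz with constant Λ and φ(0) = 0. Let D := { y = (ỹ, y_d) ∈ ℝ^d : y_d > φ(ỹ) } and let A := { y = (ỹ, y_d) ∈ ℝ^d : y_d > 2Λ|ỹ| }. Then A ⊆ D, and for every y ∈ A: dist(y, D^c) ≥ |y| / ( 4Λ ((2Λ)^{-2} + 1)^{1/2} ). -/

import Mathlib

open Metric Set

/-- If `φ : ℝ^{d-1} → ℝ` is `Λ`-Lipschitz with `Λ ≥ 1` and `φ(0) = 0`,
`D = {(yt, y_d) : y_d > φ(yt)}` and `A = {(yt, y_d) : y_d > 2Λ|yt|}`, then `A ⊆ D` and for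
every `y ∈ A`, `dist(y, D^c) ≥ |y| / (4Λ((2Λ)^{-2} + 1)^{1/2})`.  Here `ℝ^d` is
identified with the `ℓ²`-product `ℝ^{d-1} × ℝ`. -/
theorem stmt_15 (d : ℕ) (hd : 2 ≤ d) (Λ : ℝ) (hΛ : 1 ≤ Λ)
    (φ : EuclideanSpace ℝ (Fin (d - 1)) → ℝ)
    (hLip : ∀ u v : EuclideanSpace ℝ (Fin (d - 1)), |φ u - φ v| ≤ Λ * ‖u - v‖)
    (hφ0 : φ 0 = 0) :
    {y : WithLp 2 (EuclideanSpace ℝ (Fin (d - 1)) × ℝ) |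
        2 * Λ * ‖(WithLp.equiv 2 (EuclideanSpace ℝ (Fin (d - 1)) × ℝ) y).1‖
          < (WithLp.equiv 2 (EuclideanSpace ℝ (Fin (d - 1)) × ℝ) y).2}
      ⊆ {y : WithLp 2 (EuclideanSpace ℝ (Fin (d - 1)) × ℝ) |
          φ ((WithLp.equiv 2 (EuclideanSpace ℝ (Fin (d - 1)) × ℝ) y).1)
            < (WithLp.equiv 2 (EuclideanSpace ℝ (Fin (d - 1)) × ℝ) y).2} ∧
    ∀ y : WithLp 2 (EuclideanSpace ℝ (Fin (d - 1)) × ℝ),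
      2 * Λ * ‖(WithLp.equiv 2 (EuclideanSpace ℝ (Fin (d - 1)) × ℝ) y).1‖
        < (WithLp.equiv 2 (EuclideanSpace ℝ (Fin (d - 1)) × ℝ) y).2 →
      ‖y‖ / (4 * Λ * Real.sqrt (((2 * Λ) ^ 2)⁻¹ + 1))
        ≤ Metric.infDist y
            ({w : WithLp 2 (EuclideanSpace ℝ (Fin (d - 1)) × ℝ) |
              φ ((WithLp.equiv 2 (EuclideanSpace ℝ (Fin (d - 1)) × ℝ) w).1)
                < (WithLp.equiv 2 (EuclideanSpace ℝ (Fin (d - 1)) × ℝ) w).2}ᶜ) := by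
  have hΛ0 : (0:ℝ) < Λ := lt_of_lt_of_le one_pos hΛ
  -- bound |φ u| ≤ Λ ‖u‖
  have hφbound : ∀ u, |φ u| ≤ Λ * ‖u‖ := by
    intro u
    have := hLip u 0
    simpa [hφ0] using this
  constructor
  · intro y hy
    simp only [Set.mem_setOf_eq] at hy ⊢
    set u := (WithLp.equiv 2 (EuclideanSpace ℝ (Fin (d - 1)) × ℝ) y).1
    calc φ u ≤ |φ u| := le_abs_self _
      _ ≤ Λ * ‖u‖ := hφbound u
      _ ≤ 2 * Λ * ‖u‖ := by nlinarith [norm_nonneg u]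
      _ < _ := hy
  · intro y hy
    set e := WithLp.equiv 2 (EuclideanSpace ℝ (Fin (d - 1)) × ℝ)
    set yt := (e y).1
    set t := (e y).2
    have ht0 : 0 < t := lt_of_le_of_lt (by positivity) hy
    set S := {w : WithLp 2 (EuclideanSpace ℝ (Fin (d - 1)) × ℝ) |
              φ ((e) w).1 < ((e) w).2}ᶜ
    -- S is nonempty : contains 0
    have hSne : S.Nonempty := by
      refine ⟨0, ?_⟩
      simp only [S, Set.mem_compl_iff, Set.mem_setOf_eq]
      have h1 : ((e) (0 : WithLp 2 (EuclideanSpace ℝ (Fin (d - 1)) × ℝ))).1 = 0 := rfl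
      have h2 : ((e) (0 : WithLp 2 (EuclideanSpace ℝ (Fin (d - 1)) × ℝ))).2 = 0 := rfl
      rw [h1, h2, hφ0]
      exact lt_irrefl 0
    -- step 1 : ∀ w ∈ S, t/(4Λ) ≤ dist y w
    have key : t / (4 * Λ) ≤ infDist y S := by
      rw [infDist_eq_iInf]
      have : Nonempty S := hSne.to_subtype
      refine le_ciInf fun ⟨w, hw⟩ => ?_
      simp only [S, Set.mem_compl_iff, Set.mem_setOf_eq, not_lt] at hw
      set wt := ((e) w).1
      set s := ((e) w).2
      have hdist : dist y w = Real.sqrt (dist yt wt ^ 2 + dist t s ^ 2) :=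
        WithLp.prod_dist_eq_of_L2 y w
      set r := dist yt wt with hr
      have hr0 : 0 ≤ r := dist_nonneg
      by_cases hcase : t / (4 * Λ) ≤ r
      · calc t / (4 * Λ) ≤ r := hcase
          _ ≤ dist y w := by
              rw [hdist]
              apply (Real.le_sqrt hr0 (by positivity)).mpr
              nlinarith [sq_nonneg (dist t s)]
      · push_neg at hcase
        -- r < t/(4Λ) ≤ t/4, so t - s ≥ t/2 - Λ r ≥ t/4 ≥ t/(4Λ)
        have hφw : φ wt ≤ φ yt + Λ * r := by
          have := hLip wt yt
          have h2 : φ wt - φ yt ≤ Λ * ‖wt - yt‖ := le_trans (le_abs_self _) this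
          have : ‖wt - yt‖ = r := by rw [hr, dist_comm, dist_eq_norm]
          linarith [h2.trans_eq (by rw [this])]
        have hφy : φ yt ≤ Λ * ‖yt‖ := le_trans (le_abs_self _) (hφbound yt)
        have hnyt : 2 * Λ * ‖yt‖ < t := hy
        have hts : t / (4 * Λ) ≤ t - s := by
          have hΛr : Λ * r < t / 4 := by
            have := (mul_lt_mul_iff_right₀ hΛ0).mpr hcase
            calc Λ * r < Λ * (t / (4 * Λ)) := this
              _ = t / 4 := by field_simp
          have h1 : s ≤ φ wt := hw
          have h2 : φ yt < t / 2 := by nlinarith [norm_nonneg yt]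
          have h3 : t / (4*Λ) ≤ t / 4 := by
            apply div_le_div_of_nonneg_left (le_of_lt ht0) (by norm_num) (by nlinarith)
          nlinarith
        calc t / (4 * Λ) ≤ t - s := hts
          _ ≤ |t - s| := le_abs_self _
          _ = dist t s := (Real.dist_eq t s).symm
          _ ≤ dist y w := by
              rw [hdist]
              apply (Real.le_sqrt dist_nonneg (by positivity)).mpr
              nlinarith [sq_nonneg r, dist_nonneg (x := t) (y := s)]
    -- step 2 : ‖y‖ / (4Λ√(..)) ≤ t/(4Λ)
    have hnorm : ‖y‖ ≤ t * Real.sqrt (((2 * Λ) ^ 2)⁻¹ + 1) := by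
      have hsq : ‖y‖ ^ 2 = ‖yt‖ ^ 2 + t ^ 2 := by
        have := WithLp.prod_norm_sq_eq_of_L2 y
        have h2 : ‖y.snd‖ ^ 2 = y.snd ^ 2 := by rw [Real.norm_eq_abs, sq_abs]
        rw [h2] at this
        exact this
      have hytt : ‖yt‖ ≤ t / (2 * Λ) := by
        rw [le_div_iff₀ (by positivity)]
        linarith [hy, mul_comm (‖yt‖) (2*Λ)]
      have h1 : ‖y‖ ^ 2 ≤ t ^ 2 * (((2 * Λ) ^ 2)⁻¹ + 1) := by
        have : ‖yt‖ ^ 2 ≤ (t / (2 * Λ)) ^ 2 := by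
          apply sq_le_sq' _ hytt
          nlinarith [norm_nonneg yt]
        rw [hsq]
        have : (t / (2 * Λ)) ^ 2 = t ^ 2 * ((2 * Λ) ^ 2)⁻¹ := by
          rw [div_pow]; field_simp
        nlinarith [sq_le_sq' (by nlinarith [norm_nonneg yt] : -(t/(2*Λ)) ≤ ‖yt‖) hytt]
      have h2 : t * Real.sqrt (((2 * Λ) ^ 2)⁻¹ + 1) =
          Real.sqrt (t ^ 2 * (((2 * Λ) ^ 2)⁻¹ + 1)) := by
        rw [Real.sqrt_mul (by positivity), Real.sqrt_sq (le_of_lt ht0)]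
      rw [h2]
      exact (Real.le_sqrt (norm_nonneg y) (by positivity)).mpr h1
    have hsqrt1 : (1:ℝ) ≤ Real.sqrt (((2 * Λ) ^ 2)⁻¹ + 1) := by
      have h := Real.sqrt_le_sqrt (show (1:ℝ) ≤ ((2*Λ)^2)⁻¹+1 by
        nlinarith [inv_pos.mpr (show (0:ℝ) < (2*Λ)^2 by positivity)])
      simpa using h
    have hsqrtpos : 0 < Real.sqrt (((2 * Λ) ^ 2)⁻¹ + 1) := lt_of_lt_of_le one_pos hsqrt1
    refine le_trans ?_ key
    rw [div_le_div_iff₀ (by positivity) (by positivity)]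
    calc ‖y‖ * (4 * Λ) ≤ t * Real.sqrt (((2 * Λ) ^ 2)⁻¹ + 1) * (4 * Λ) := by
          apply mul_le_mul_of_nonneg_right hnorm (by positivity)
      _ = t * (4 * Λ * Real.sqrt (((2 * Λ) ^ 2)⁻¹ + 1)) := by ring
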